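/- Let M be a matroid of rank k ≥ 2 on finite ground set X, d a negative-type distance on X, OPT a basis of M maximizing the dispersion. Suppose a sequence of bases A_0, A_1, ..., A_ℓ satisfies d(A_{i+1}) − d(A_i) ≥ max over feasible single-element exchanges of the improvement (i.e., A_{i+1} is a best single-exchange improvement of A_i whenever an improving exchange exists). Then d(A_ℓ) ≥ (1 − (1−1/k)^ℓ)·(1 − 4/k)·d(OPT). -/

import Mathlib

open Finset

/-- `d` is a distance of negative type on the finite type `X`. -/
def NegType {X : Type*} [Fintype X] (d : X → X → ℝ) : Prop :=
  ∀ x : X → ℝ, ∑ i, x i = 0 → ∑ i, ∑ j, x i * d i j * x j ≤ 0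

/-- The dispersion of a finite set: sum of distances over unordered pairs. -/
noncomputable def disp {X : Type*} (d : X → X → ℝ) (A : Finset X) : ℝ :=
  (∑ a ∈ A, ∑ b ∈ A, d a b) / 2

/-- Sum of all distances between two sets. -/
def dsum {X : Type*} (d : X → X → ℝ) (A B : Finset X) : ℝ :=
  ∑ a ∈ A, ∑ b ∈ B, d a b

set_option linter.unusedSectionVars false
set_option linter.unusedVariables false
set_option linter.unnecessarySimpa false

section Aux

variable {X : Type*} [Fintype X] [DecidableEq X] {d : X → X → ℝ}

lemma sum_mul_ind (g : X → ℝ) (a : X) :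
    ∑ j, g j * (if j = a then (1:ℝ) else 0) = g a := by
  simp [mul_ite]

lemma sum_mul_chi (g : X → ℝ) (A : Finset X) :
    ∑ j, g j * (if j ∈ A then (1:ℝ) else 0) = ∑ j ∈ A, g j := by
  simp [mul_ite, Finset.sum_ite_mem, Finset.univ_inter]

lemma sum_chi (A : Finset X) :
    ∑ j, (if j ∈ A then (1:ℝ) else 0) = A.card := by
  simp [Finset.sum_ite_mem, Finset.univ_inter]

lemma sum_mul_const_mul (h : X → ℝ) (c : ℝ) (t : X → ℝ) :
    ∑ j, h j * (c * t j) = c * ∑ j, h j * t j := by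
  rw [Finset.mul_sum]; exact Finset.sum_congr rfl fun j _ => by ring

lemma disp_nonneg (hnonneg : ∀ a b, 0 ≤ d a b) (A : Finset X) : 0 ≤ disp d A := by
  unfold disp
  have : (0:ℝ) ≤ ∑ a ∈ A, ∑ b ∈ A, d a b :=
    Finset.sum_nonneg fun a _ => Finset.sum_nonneg fun b _ => hnonneg a b
  linarith

/-- neg type instance (i): `2*dsum(O,A) ≥ totO + totA` when `|O| = |A|`. -/
lemma negtype_dsum (hneg : NegType d) (hsymm : ∀ a b, d a b = d b a) {O A : Finset X}
    (hcard : O.card = A.card) :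
    (∑ a ∈ O, ∑ b ∈ O, d a b) + (∑ a ∈ A, ∑ b ∈ A, d a b) ≤ 2 * dsum d O A := by
  set x : X → ℝ := fun i => (if i ∈ O then (1:ℝ) else 0) - (if i ∈ A then (1:ℝ) else 0) with hx
  have hsum : ∑ i, x i = 0 := by
    simp only [hx, Finset.sum_sub_distrib, sum_chi, hcard, sub_self]
  have hQ := hneg x hsum
  have hr : ∀ i, ∑ j, d i j * x j = (∑ j ∈ O, d i j) - (∑ j ∈ A, d i j) := by
    intro i
    simp only [hx, mul_sub, Finset.sum_sub_distrib, sum_mul_chi]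
  have hQ' : ∑ i, ∑ j, x i * d i j * x j
      = ((∑ i ∈ O, ∑ j ∈ O, d i j) - dsum d O A) - (dsum d A O - ∑ i ∈ A, ∑ j ∈ A, d i j) := by
    have h1 : ∀ i, ∑ j, x i * d i j * x j = x i * ((∑ j ∈ O, d i j) - (∑ j ∈ A, d i j)) := by
      intro i
      rw [← hr i, Finset.mul_sum]
      exact Finset.sum_congr rfl fun j _ => by ring
    rw [Finset.sum_congr rfl fun i _ => h1 i]
    simp only [hx, sub_mul, Finset.sum_sub_distrib]
    have e1 : ∀ (g : X → ℝ), ∑ i, (if i ∈ O then (1:ℝ) else 0) * g i = ∑ i ∈ O, g i :=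
      fun g => by simpa [mul_comm] using sum_mul_chi g O
    have e2 : ∀ (g : X → ℝ), ∑ i, (if i ∈ A then (1:ℝ) else 0) * g i = ∑ i ∈ A, g i :=
      fun g => by simpa [mul_comm] using sum_mul_chi g A
    rw [e1, e2]
    simp only [Finset.sum_sub_distrib]
    rfl
  have hAO : dsum d A O = dsum d O A := by
    unfold dsum; rw [Finset.sum_comm]
    exact Finset.sum_congr rfl fun i _ => Finset.sum_congr rfl fun j _ => hsymm j i
  rw [hQ', hAO] at hQ
  linarith

/-- neg type instance (ii): `k² d a b ≤ 2k(row a + row b) − 2 T_A` where `|A| = k`. -/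
lemma negtype_pair (hneg : NegType d) (hsymm : ∀ a b, d a b = d b a)
    (hdiag : ∀ a, d a a = 0) {A : Finset X} {k : ℕ}
    (hcard : A.card = k) (a b : X) :
    (k:ℝ)^2 * d a b ≤ 2*k*((∑ j ∈ A, d a j) + (∑ j ∈ A, d b j)) - 2 * ∑ i ∈ A, ∑ j ∈ A, d i j := by
  set x : X → ℝ := fun i => (k:ℝ) * (if i = a then (1:ℝ) else 0)
      + (k:ℝ) * (if i = b then (1:ℝ) else 0) - 2 * (if i ∈ A then (1:ℝ) else 0) with hx
  have hsum : ∑ i, x i = 0 := by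
    simp only [hx, Finset.sum_sub_distrib, Finset.sum_add_distrib, ← Finset.mul_sum, sum_chi,
      hcard]
    simp
    ring
  have hQ := hneg x hsum
  have hr : ∀ i, ∑ j, d i j * x j = (k:ℝ) * d i a + (k:ℝ) * d i b - 2 * ∑ j ∈ A, d i j := by
    intro i
    simp only [hx, mul_sub, mul_add, Finset.sum_sub_distrib, Finset.sum_add_distrib,
      sum_mul_const_mul, sum_mul_ind, sum_mul_chi]
  have hQ' : ∑ i, ∑ j, x i * d i j * x j
      = (k:ℝ) * ((k:ℝ) * d a a + (k:ℝ) * d a b - 2 * ∑ j ∈ A, d a j)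
        + (k:ℝ) * ((k:ℝ) * d b a + (k:ℝ) * d b b - 2 * ∑ j ∈ A, d b j)
        - 2 * ∑ i ∈ A, ((k:ℝ) * d i a + (k:ℝ) * d i b - 2 * ∑ j ∈ A, d i j) := by
    have h1 : ∀ i, ∑ j, x i * d i j * x j
        = x i * ((k:ℝ) * d i a + (k:ℝ) * d i b - 2 * ∑ j ∈ A, d i j) := by
      intro i
      rw [← hr i, Finset.mul_sum]
      exact Finset.sum_congr rfl fun j _ => by ring
    rw [Finset.sum_congr rfl fun i _ => h1 i]
    set g : X → ℝ := fun i => (k:ℝ) * d i a + (k:ℝ) * d i b - 2 * ∑ j ∈ A, d i j with hg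
    show ∑ i, x i * g i = (k:ℝ) * g a + (k:ℝ) * g b - 2 * ∑ i ∈ A, g i
    have ea : ∑ i, (if i = a then (1:ℝ) else 0) * g i = g a := by
      simpa [mul_comm] using sum_mul_ind g a
    have eb : ∑ i, (if i = b then (1:ℝ) else 0) * g i = g b := by
      simpa [mul_comm] using sum_mul_ind g b
    have ec : ∑ i, (if i ∈ A then (1:ℝ) else 0) * g i = ∑ i ∈ A, g i := by
      simpa [mul_comm] using sum_mul_chi g A
    calc ∑ i, x i * g i
        = (k:ℝ) * ∑ i, (if i = a then (1:ℝ) else 0) * g i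
          + (k:ℝ) * ∑ i, (if i = b then (1:ℝ) else 0) * g i
          - 2 * ∑ i, (if i ∈ A then (1:ℝ) else 0) * g i := by
          simp only [Finset.mul_sum, ← Finset.sum_sub_distrib, ← Finset.sum_add_distrib]
          exact Finset.sum_congr rfl fun i _ => by simp only [hx]; ring
      _ = (k:ℝ) * g a + (k:ℝ) * g b - 2 * ∑ i ∈ A, g i := by rw [ea, eb, ec]
  rw [hQ'] at hQ
  have hcolA : ∑ i ∈ A, d i a = ∑ j ∈ A, d a j := Finset.sum_congr rfl fun i _ => hsymm i a
  have hcolB : ∑ i ∈ A, d i b = ∑ j ∈ A, d b j := Finset.sum_congr rfl fun i _ => hsymm i b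
  have hdiagsum : ∑ i ∈ A, ((k:ℝ) * d i a + (k:ℝ) * d i b - 2 * ∑ j ∈ A, d i j)
      = (k:ℝ) * (∑ j ∈ A, d a j) + (k:ℝ) * (∑ j ∈ A, d b j) - 2 * ∑ i ∈ A, ∑ j ∈ A, d i j := by
    simp only [Finset.sum_sub_distrib, Finset.sum_add_distrib, ← Finset.mul_sum, hcolA, hcolB]
  rw [hdiagsum, hsymm b a, hdiag a, hdiag b] at hQ
  nlinarith [hQ]

/-- Fundamental-circuit style lemma: if `f ∈ cl(J)` for independent `J`, and
`f ∈ cl(J \ {e})` for every `e ∈ S`, then `f ∈ cl(J \ S)`. -/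
lemma mem_closure_diff_of_forall {M : Matroid X} {J : Finset X} (hJ : M.Indep ↑J) {f : X}
    (hf : f ∈ M.closure ↑J) (S : Set X) (hS : ∀ e ∈ S, f ∈ M.closure (↑J \ {e})) :
    f ∈ M.closure (↑J \ S) := by
  classical
  set s : Finset (Finset X) := J.powerset.filter (fun J' => f ∈ M.closure ↑J') with hs
  have hJs : J ∈ s := by
    simp only [hs, Finset.mem_filter, Finset.mem_powerset]
    exact ⟨subset_rfl, hf⟩
  obtain ⟨J₀, hJ₀s, hmin⟩ := Finset.exists_min_image s Finset.card ⟨J, hJs⟩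
  rw [hs, Finset.mem_filter, Finset.mem_powerset] at hJ₀s
  obtain ⟨hJ₀J, hfJ₀⟩ := hJ₀s
  have hdisj : ∀ e ∈ J₀, e ∉ S := by
    intro e heJ₀ heS
    have heJ : e ∈ J := hJ₀J heJ₀
    have hnot : f ∉ M.closure ↑(J₀.erase e) := by
      intro hmem
      have hin : J₀.erase e ∈ s := by
        simp only [hs, Finset.mem_filter, Finset.mem_powerset]
        exact ⟨(Finset.erase_subset e J₀).trans hJ₀J, hmem⟩
      have := hmin _ hin
      have hlt : (J₀.erase e).card < J₀.card := Finset.card_erase_lt_of_mem heJ₀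
      omega
    have hins : (insert e (↑(J₀.erase e) : Set X)) = ↑J₀ := by
      rw [Finset.coe_erase]
      exact Set.insert_diff_singleton.trans (by rw [Set.insert_eq_self]; exact heJ₀)
    have hexch := Matroid.closure_exchange (M := M) (X := ↑(J₀.erase e)) (e := f) (f := e)
      (by rw [hins]; exact ⟨hfJ₀, hnot⟩)
    have he1 : e ∈ M.closure (insert f (↑(J₀.erase e) : Set X)) := hexch.1
    have hsub : (insert f (↑(J₀.erase e) : Set X)) ⊆ M.closure (↑J \ {e}) := by
      rw [Set.insert_subset_iff]
      refine ⟨hS e heS, ?_⟩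
      refine Set.Subset.trans ?_ (M.subset_closure (↑J \ {e})
        (Set.diff_subset.trans hJ.subset_ground))
      rw [Finset.coe_erase]
      exact Set.diff_subset_diff_left (Finset.coe_subset.2 hJ₀J)
    have he2 : e ∈ M.closure (↑J \ {e}) :=
      Matroid.closure_subset_closure_of_subset_closure hsub he1
    exact hJ.notMem_closure_diff_of_mem heJ he2
  have hsub : (↑J₀ : Set X) ⊆ ↑J \ S := fun e he => ⟨hJ₀J he, hdisj e he⟩
  exact M.closure_subset_closure hsub hfJ₀

/-- Existence of an exchange bijection between bases (Brualdi-type, weak form). -/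
lemma exists_exchange_map {M : Matroid X} {A O : Finset X} {k : ℕ}
    (hA : M.IsBase ↑A) (hO : M.IsBase ↑O)
    (hrank : ∀ B : Finset X, M.IsBase ↑B → B.card = k) :
    ∃ π : X → X, Set.InjOn π ↑A ∧
      (∀ a ∈ A, a ∈ O → π a = a) ∧
      (∀ a ∈ A, a ∉ O → (π a ∈ O ∧ π a ∉ A ∧ M.Indep ↑(insert (π a) (A.erase a)))) := by
  classical
  set N : X → Finset X := fun e => (O \ A).filter
    (fun g => M.Indep ↑(insert g (A.erase e))) with hN
  -- Hall condition
  have hall : ∀ s : Finset {x // x ∈ A \ O}, s.card ≤ (s.biUnion (fun e => N e.1)).card := by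
    intro s
    set S : Finset X := s.image Subtype.val with hS
    have hcardS : S.card = s.card := Finset.card_image_of_injective s Subtype.val_injective
    have hSsub : S ⊆ A \ O := by
      intro x hx
      rw [hS, Finset.mem_image] at hx
      obtain ⟨⟨y, hy⟩, _, rfl⟩ := hx
      exact hy
    have hbiU : s.biUnion (fun e => N e.1) = S.biUnion N := by
      rw [hS, Finset.image_biUnion]
    rw [hbiU]
    set T : Finset X := S.biUnion N with hT
    -- O ⊆ closure ((A \ S) ∪ T)
    set W : Finset X := (A \ S) ∪ T with hW
    have hWE : (↑W : Set X) ⊆ M.E := by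
      rw [hW]
      intro x hx
      rcases Finset.mem_union.1 (by exact_mod_cast hx) with h | h
      · exact hA.subset_ground (by exact_mod_cast (Finset.mem_sdiff.1 h).1)
      · rw [hT, Finset.mem_biUnion] at h
        obtain ⟨e, _, hxe⟩ := h
        rw [hN] at hxe
        exact hO.subset_ground
          (by exact_mod_cast (Finset.mem_sdiff.1 (Finset.mem_filter.1 hxe).1).1)
    have hOsub : (↑O : Set X) ⊆ M.closure ↑W := by
      intro f hfO
      have hfO' : f ∈ O := by exact_mod_cast hfO
      by_cases hfA : f ∈ A
      · have : f ∈ W := by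
          rw [hW, Finset.mem_union, Finset.mem_sdiff]
          left
          refine ⟨hfA, fun hfS => ?_⟩
          exact (Finset.mem_sdiff.1 (hSsub hfS)).2 hfO'
        exact M.subset_closure ↑W hWE (by exact_mod_cast this)
      · by_cases hex : ∃ e ∈ S, M.Indep ↑(insert f (A.erase e))
        · obtain ⟨e, heS, hind⟩ := hex
          have : f ∈ T := by
            rw [hT, Finset.mem_biUnion]
            exact ⟨e, heS, by
              rw [hN, Finset.mem_filter, Finset.mem_sdiff]
              exact ⟨⟨hfO', hfA⟩, hind⟩⟩
          have : f ∈ W := by rw [hW, Finset.mem_union]; right; exact this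
          exact M.subset_closure ↑W hWE (by exact_mod_cast this)
        · push_neg at hex
          have hfE : f ∈ M.E := hO.subset_ground hfO
          have hcl : ∀ e ∈ (↑S : Set X), f ∈ M.closure (↑A \ {e}) := by
            intro e heS
            have heS' : e ∈ S := by exact_mod_cast heS
            have hind := hex e heS'
            have hIe : M.Indep ↑(A.erase e) :=
              hA.indep.subset (by rw [Finset.coe_erase]; exact Set.diff_subset)
            have := (hIe.insert_indep_iff (e := f)).not.1 (by
              rwa [show ((insert f (A.erase e) : Finset X) : Set X)
                = insert f ↑(A.erase e) by simp] at hind)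
            push_neg at this
            have h1 := this.1
            have h2 : f ∉ (↑(A.erase e) : Set X) := by
              rw [Finset.coe_erase]
              exact fun h => hfA (by exact_mod_cast h.1)
            rw [Set.mem_diff, not_and, not_not] at h1
            have := h1 hfE
            rwa [Finset.coe_erase] at this
          have hfclA : f ∈ M.closure ↑A := by
            rw [hA.closure_eq]; exact hfE
          have := mem_closure_diff_of_forall hA.indep hfclA ↑S hcl
          refine M.closure_subset_closure ?_ this
          rw [hW]
          intro x hx
          rw [Set.mem_diff] at hx
          have : x ∈ A \ S := Finset.mem_sdiff.2 ⟨by exact_mod_cast hx.1,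
            fun h => hx.2 (by exact_mod_cast h)⟩
          exact_mod_cast Finset.mem_union_left T this
    -- W is spanning
    have hWspan : M.Spanning ↑W := by
      rw [Matroid.spanning_iff]
      refine ⟨?_, hWE⟩
      refine subset_antisymm (M.closure_subset_ground ↑W) ?_
      rw [← hO.closure_eq]
      exact Matroid.closure_subset_closure_of_subset_closure hOsub
    obtain ⟨B', hB', hB'W⟩ := hWspan.exists_isBase_subset
    have hB'fin : B'.Finite := Set.Finite.subset (Finset.finite_toSet W) hB'W
    have hB'card : hB'fin.toFinset.card = k := by
      apply hrank
      rwa [Set.Finite.coe_toFinset]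
    have hB'sub : hB'fin.toFinset ⊆ W := by
      intro x hx
      rw [Set.Finite.mem_toFinset] at hx
      exact_mod_cast hB'W hx
    have hkW : k ≤ W.card := hB'card ▸ Finset.card_le_card hB'sub
    have hWcard : W.card ≤ (A \ S).card + T.card := Finset.card_union_le _ _
    have hAS : (A \ S).card = A.card - S.card := by
      apply Finset.card_sdiff_of_subset
      exact hSsub.trans (Finset.sdiff_subset)
    have hAk : A.card = k := hrank A hA
    have hSA : S.card ≤ A.card :=
      Finset.card_le_card (hSsub.trans Finset.sdiff_subset)
    rw [← hcardS]
    omega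
  obtain ⟨f₀, hf₀inj, hf₀mem⟩ :=
    (Finset.all_card_le_biUnion_card_iff_exists_injective (fun e : {x // x ∈ A \ O} => N e.1)).1
      hall
  refine ⟨fun a => if h : a ∈ A \ O then f₀ ⟨a, h⟩ else a, ?_, ?_, ?_⟩
  · intro a ha a' ha' hEq
    have haA : a ∈ A := by exact_mod_cast ha
    have ha'A : a' ∈ A := by exact_mod_cast ha'
    by_cases h1 : a ∈ A \ O <;> by_cases h2 : a' ∈ A \ O
    · simp only [dif_pos h1, dif_pos h2] at hEq
      exact congrArg Subtype.val (hf₀inj hEq)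
    · exfalso
      simp only [dif_pos h1, dif_neg h2] at hEq
      have := hf₀mem ⟨a, h1⟩
      rw [Finset.mem_filter] at this
      have : f₀ ⟨a, h1⟩ ∉ A := (Finset.mem_sdiff.1 this.1).2
      exact this (hEq ▸ ha'A)
    · exfalso
      simp only [dif_neg h1, dif_pos h2] at hEq
      have := hf₀mem ⟨a', h2⟩
      rw [Finset.mem_filter] at this
      have : f₀ ⟨a', h2⟩ ∉ A := (Finset.mem_sdiff.1 this.1).2
      exact this (hEq ▸ haA)
    · simp only [dif_neg h1, dif_neg h2] at hEq
      exact hEq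
  · intro a haA haO
    have : a ∉ A \ O := fun h => (Finset.mem_sdiff.1 h).2 haO
    simp [this]
  · intro a haA haO
    have h1 : a ∈ A \ O := Finset.mem_sdiff.2 ⟨haA, haO⟩
    simp only [dif_pos h1]
    have := hf₀mem ⟨a, h1⟩
    rw [Finset.mem_filter, Finset.mem_sdiff] at this
    exact ⟨this.1.1, this.1.2, this.2⟩

lemma arith_step (K q s x x' : ℝ) (hK2 : 2 ≤ K) (hq0 : 0 ≤ q) (hq1 : q ≤ 1)
    (hs : 0 ≤ s) (hx0 : 0 ≤ x)
    (hcore : K^2*(x' - x) ≥ (K-2)*(s+x) - 2*K*x)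
    (hIH2 : (1-q)*(K-4)*s ≤ K*x) :
    (K - q*(K-1))*(K-4)*s ≤ K^2*x' := by
  have hKpos : (0:ℝ) < K := by linarith
  have hcore' : K^2*x' ≥ (K^2 - K - 2)*x + (K-2)*s := by nlinarith [hcore]
  have h3 : K^3 * x' ≥ (K^2 - K - 2) * (K*x) + K*(K-2)*s := by
    nlinarith [hcore', hKpos.le]
  have hcoef : (0:ℝ) ≤ K^2 - K - 2 := by nlinarith [hK2]
  have h4 : (K^2 - K - 2) * ((1-q)*(K-4)*s) ≤ (K^2 - K - 2) * (K*x) :=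
    mul_le_mul_of_nonneg_left hIH2 hcoef
  have h5 : K^3*x' ≥ (K^2 - K - 2)*((1-q)*(K-4)*s) + K*(K-2)*s := by linarith
  have t1 : (0:ℝ) ≤ q*s*(K-2) := mul_nonneg (mul_nonneg hq0 hs) (by linarith)
  have t2 : (0:ℝ) ≤ s*(2-q) := mul_nonneg hs (by linarith)
  have h7 : K^3*x' ≥ K*((K - q*(K-1))*(K-4)*s) := by nlinarith [h5, t1, t2]
  have h8 : K*((K - q*(K-1))*(K-4)*s) ≤ K*(K^2*x') := by nlinarith [h7]
  exact le_of_mul_le_mul_left h8 hKpos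


lemma row_symm (hsymm : ∀ a b : X, d a b = d b a) (A : Finset X) (b : X) :
    ∑ i ∈ A, d i b = ∑ j ∈ A, d b j :=
  Finset.sum_congr rfl fun i _ => hsymm i b

/-- dispersion of inserting a new element -/
lemma disp_insert (hsymm : ∀ a b : X, d a b = d b a) (hdiag : ∀ a : X, d a a = 0)
    {C : Finset X} {b : X} (hb : b ∉ C) :
    disp d (insert b C) = disp d C + ∑ y ∈ C, d b y := by
  unfold disp
  rw [Finset.sum_insert hb]
  have h1 : ∀ a ∈ C, ∑ j ∈ insert b C, d a j = d a b + ∑ j ∈ C, d a j := by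
    intro a _
    rw [Finset.sum_insert hb]
  rw [Finset.sum_insert hb, Finset.sum_congr rfl h1, Finset.sum_add_distrib,
    row_symm hsymm C b, hdiag b]
  ring

/-- the gain of a single exchange -/
lemma disp_exchange (hsymm : ∀ a b : X, d a b = d b a) (hdiag : ∀ a : X, d a a = 0)
    {A : Finset X} {a b : X} (ha : a ∈ A) (hb : b ∉ A) :
    disp d (insert b (A.erase a)) - disp d A
      = (∑ j ∈ A, d b j) - d b a - ∑ j ∈ A, d a j := by
  have hbe : b ∉ A.erase a := fun h => hb (Finset.mem_of_mem_erase h)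
  have hae : a ∉ A.erase a := Finset.notMem_erase a A
  have e1 : disp d (insert b (A.erase a)) = disp d (A.erase a) + ∑ y ∈ A.erase a, d b y :=
    disp_insert hsymm hdiag hbe
  have e2 : disp d A = disp d (A.erase a) + ∑ y ∈ A.erase a, d a y := by
    conv_lhs => rw [← Finset.insert_erase ha]
    exact disp_insert hsymm hdiag hae
  have e3 : ∑ y ∈ A.erase a, d b y = (∑ j ∈ A, d b j) - d b a := by
    rw [eq_sub_iff_add_eq, Finset.sum_erase_add A _ ha]
  have e4 : ∑ y ∈ A.erase a, d a y = ∑ j ∈ A, d a j := by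
    rw [← Finset.sum_erase_add A _ ha, hdiag a, add_zero]
  rw [e1, e2, e3, e4]
  ring

/-- Core local-search inequality for one step. -/
lemma core_step (hsymm : ∀ a b : X, d a b = d b a) (hnonneg : ∀ a b : X, 0 ≤ d a b)
    (hdiag : ∀ a : X, d a a = 0) (hneg : NegType d)
    {M : Matroid X} {A B O : Finset X} {k : ℕ} (hk : 2 ≤ k)
    (hA : M.IsBase ↑A) (hO : M.IsBase ↑O)
    (hrank : ∀ C : Finset X, M.IsBase ↑C → C.card = k)
    (hmono : disp d A ≤ disp d B)
    (hbest : ∀ a ∈ A, ∀ b ∉ A, M.Indep ↑(insert b (A.erase a)) →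
      disp d B - disp d A ≥ disp d (insert b (A.erase a)) - disp d A) :
    (k:ℝ)^2 * (disp d B - disp d A)
      ≥ ((k:ℝ) - 2) * (disp d O + disp d A) - 2 * (k:ℝ) * disp d A := by
  obtain ⟨π, hπinj, hπfix, hπmove⟩ := exists_exchange_map hA hO hrank
  have hcardA : A.card = k := hrank A hA
  have hcardO : O.card = k := hrank O hO
  have hπO : ∀ a ∈ A, π a ∈ O := by
    intro a ha
    by_cases h : a ∈ O
    · rw [hπfix a ha h]; exact h
    · exact (hπmove a ha h).1
  -- image of A under π is O
  have himg : A.image π = O := by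
    apply Finset.eq_of_subset_of_card_le
    · intro x hx
      rw [Finset.mem_image] at hx
      obtain ⟨a, ha, rfl⟩ := hx
      exact hπO a ha
    · rw [Finset.card_image_of_injOn (fun x hx y hy h => hπinj (by exact_mod_cast hx)
        (by exact_mod_cast hy) h), hcardA, hcardO]
  set G := disp d B - disp d A with hG
  set Δ : X → ℝ := fun a => (∑ j ∈ A, d (π a) j) - d (π a) a - ∑ j ∈ A, d a j with hΔ
  have hΔle : ∀ a ∈ A, Δ a ≤ G := by
    intro a ha
    by_cases h : a ∈ O
    · have : Δ a = 0 := by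
        simp only [hΔ, hπfix a ha h, hdiag a]
        ring
      rw [this]; linarith
    · obtain ⟨hbO, hbA, hind⟩ := hπmove a ha h
      have := hbest a ha (π a) hbA hind
      rw [disp_exchange hsymm hdiag ha hbA] at this
      exact this
  -- sum of gains
  have hsumΔ : ∑ a ∈ A, Δ a ≤ (k:ℝ) * G := by
    have := Finset.sum_le_card_nsmul A Δ G hΔle
    rwa [hcardA, nsmul_eq_mul] at this
  set T := ∑ i ∈ A, ∑ j ∈ A, d i j with hT
  set U := ∑ i ∈ O, ∑ j ∈ O, d i j with hU
  set D := dsum d O A with hD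
  have hrowsum : ∑ a ∈ A, (∑ j ∈ A, d (π a) j) = D := by
    rw [hD]
    unfold dsum
    rw [← himg, Finset.sum_image (fun x hx y hy h => hπinj (by exact_mod_cast hx)
      (by exact_mod_cast hy) h)]
  set P := ∑ a ∈ A, d (π a) a with hP
  have hΔsum : ∑ a ∈ A, Δ a = D - P - T := by
    simp only [hΔ, Finset.sum_sub_distrib, hrowsum, hP, hT]
  -- bound on P via negtype_pair
  have hPb : (k:ℝ)^2 * P ≤ 2*(k:ℝ)*(D + T) - 2*(k:ℝ)*T := by
    have hterm : ∀ a ∈ A, (k:ℝ)^2 * d (π a) a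
        ≤ 2*(k:ℝ)*((∑ j ∈ A, d (π a) j) + (∑ j ∈ A, d a j)) - 2 * T :=
      fun a _ => negtype_pair hneg hsymm hdiag hcardA (π a) a
    have hsum := Finset.sum_le_sum hterm
    rw [← Finset.mul_sum] at hsum
    have hr : ∑ a ∈ A, (2*(k:ℝ)*((∑ j ∈ A, d (π a) j) + (∑ j ∈ A, d a j)) - 2 * T)
        = 2*(k:ℝ)*(D + T) - 2*(k:ℝ)*T := by
      rw [Finset.sum_sub_distrib, ← Finset.mul_sum, Finset.sum_add_distrib, hrowsum]
      rw [Finset.sum_const, hcardA, nsmul_eq_mul]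
      rw [hT]
      ring
    rw [hr] at hsum
    exact hsum
  -- dsum bound
  have hUT : U + T ≤ 2 * D := negtype_dsum hneg hsymm (hcardO.trans hcardA.symm)
  -- put together
  have hk1 : (1:ℝ) ≤ (k:ℝ) := by exact_mod_cast Nat.one_le_of_lt hk
  have hk2 : (2:ℝ) ≤ (k:ℝ) := by exact_mod_cast hk
  have hkpos : (0:ℝ) < (k:ℝ) := by linarith
  have hDnn : 0 ≤ D := Finset.sum_nonneg fun i _ => Finset.sum_nonneg fun j _ => hnonneg i j
  have hTnn : 0 ≤ T := Finset.sum_nonneg fun i _ => Finset.sum_nonneg fun j _ => hnonneg i j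
  -- k*G ≥ D − P − T ;  k² P ≤ 2kD ; U + T ≤ 2D
  have hstep1 : (k:ℝ) * G ≥ D - P - T := by linarith [hsumΔ, hΔsum.ge, hΔsum.le]
  -- k²*(kG) ≥ k²D − k²P − k²T ≥ k²D − 2kD − k²T
  have hstep2 : (k:ℝ)^2 * ((k:ℝ) * G) ≥ (k:ℝ)^2 * D - 2*(k:ℝ)*D - (k:ℝ)^2 * T := by
    nlinarith [hstep1, hPb, sq_nonneg ((k:ℝ))]
  -- (k−2)D ≥ (k−2)(U+T)/2
  have hstep3 : ((k:ℝ) - 2) * (2*D) ≥ ((k:ℝ) - 2) * (U + T) := by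
    nlinarith [hUT]
  have hdispO : disp d O = U / 2 := rfl
  have hdispA : disp d A = T / 2 := rfl
  rw [hdispO, hdispA, hG] at *
  nlinarith [hstep2, hstep3, hkpos, mul_pos hkpos hkpos]

end Aux

theorem stmt_6 {X : Type*} [Fintype X] [DecidableEq X] (d : X → X → ℝ)
    (hsymm : ∀ a b, d a b = d b a) (hnonneg : ∀ a b, 0 ≤ d a b)
    (hdiag : ∀ a, d a a = 0) (hneg : NegType d)
    (M : Matroid X) (k : ℕ) (hk : 2 ≤ k)
    (hrank : ∀ B : Finset X, M.IsBase ↑B → B.card = k)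
    (OPT : Finset X) (hOPT : M.IsBase ↑OPT)
    (hOPTmax : ∀ B : Finset X, M.IsBase ↑B → disp d B ≤ disp d OPT)
    (ℓ : ℕ) (A : ℕ → Finset X) (hbase : ∀ i ≤ ℓ, M.IsBase ↑(A i))
    (hmono : ∀ i < ℓ, disp d (A i) ≤ disp d (A (i + 1)))
    (hbest : ∀ i < ℓ, ∀ a ∈ A i, ∀ b ∉ A i,
      M.Indep ↑(insert b ((A i).erase a)) →
      disp d (A (i + 1)) - disp d (A i)
        ≥ disp d (insert b ((A i).erase a)) - disp d (A i)) :
    disp d (A ℓ) ≥ (1 - (1 - 1 / k) ^ ℓ) * (1 - 4 / k) * disp d OPT := by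
  have hK2 : (2:ℝ) ≤ (k:ℝ) := by exact_mod_cast hk
  have hKpos : (0:ℝ) < (k:ℝ) := by linarith
  have hK0 : (k:ℝ) ≠ 0 := ne_of_gt hKpos
  set K : ℝ := (k:ℝ) with hKdef
  set s := disp d OPT with hsdef
  have hs : 0 ≤ s := disp_nonneg hnonneg OPT
  have claim : ∀ i, i ≤ ℓ → disp d (A i) ≥ (1 - (1 - 1/K)^i) * (1 - 4/K) * s := by
    intro i
    induction i with
    | zero =>
      intro _
      simpa using disp_nonneg hnonneg (A 0)
    | succ i ih =>
      intro hi
      have hiℓ : i < ℓ := hi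
      have hIH := ih (le_of_lt hiℓ)
      set x := disp d (A i) with hxdef
      set x' := disp d (A (i+1)) with hx'def
      set q := (1 - 1/K)^i with hqdef
      have h1K : (0:ℝ) ≤ 1 - 1/K := by
        rw [sub_nonneg, div_le_one hKpos]; linarith
      have h1K' : 1 - 1/K ≤ 1 := by
        have : 0 ≤ 1/K := by positivity
        linarith
      have hq0 : 0 ≤ q := pow_nonneg h1K i
      have hq1 : q ≤ 1 := pow_le_one₀ h1K h1K'
      have hcore := core_step hsymm hnonneg hdiag hneg hk (hbase i (le_of_lt hiℓ)) hOPT hrank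
        (hmono i hiℓ) (hbest i hiℓ)
      have hx0 : 0 ≤ x := disp_nonneg hnonneg _
      have hIH2 : (1-q)*(K-4)*s ≤ K*x := by
        have heq : (1-q)*(K-4)*s = K*((1-q)*(1-4/K)*s) := by
          field_simp
          try ring
        rw [heq]
        exact mul_le_mul_of_nonneg_left hIH hKpos.le
      have key := arith_step K q s x x' hK2 hq0 hq1 hs hx0 hcore hIH2
      rw [pow_succ]
      have h9 : K^2 * ((1 - q*(1-1/K))*(1-4/K)*s) ≤ K^2*x' := by
        have heq : K^2 * ((1 - q*(1-1/K))*(1-4/K)*s) = (K - q*(K-1))*(K-4)*s := by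
          field_simp
          try ring
        rw [heq]
        exact key
      exact le_of_mul_le_mul_left h9 (by positivity)
  exact claim ℓ le_rfl
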